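/- Let S be a restriction semigroup with local units and define, for each s ∈ S, the set ι(s) = {(s, φ) germ class : φ(s*) = 1} via the germ equivalence (s,φ) ∼ (t,φ) iff there is u ≤ s,t with φ(u*) = 1. Then the map s ↦ ι(s) is injective: if for every character φ with φ(s*) = 1 = φ(t*) the pairs (s,φ) and (t,φ) are germ-equivalent and D_{s*} = D_{t*}, then s = t. In particular, evaluating at the principal-filter character χ_{(s*)↑} shows s ≤ t and t ≤ s. -/
import Mathlib


/-- A restriction semigroup: an Ehresmann semigroup (a semigroup with a unary
operation `rstar` satisfying `x x* = x`, `x* y* = y* x* = (x* y*)*`, `(xy)* = (x* y)*`)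
which additionally satisfies the identity `x* y = y (xy)*`. -/
class RestrictionSemigroup (S : Type*) extends Semigroup S where
  rstar : S → S
  mul_rstar_self : ∀ x : S, x * rstar x = x
  rstar_comm : ∀ x y : S, rstar x * rstar y = rstar y * rstar x
  rstar_mul_proj : ∀ x y : S, rstar x * rstar y = rstar (rstar x * rstar y)
  rstar_mul : ∀ x y : S, rstar (x * y) = rstar (rstar x * y)
  restriction : ∀ x y : S, rstar x * y = y * rstar (x * y)

open RestrictionSemigroup

variable {S : Type*} [RestrictionSemigroup S]

/-- The natural partial order: `s ≤ t` iff `s = t s*`. -/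
def rle (s t : S) : Prop := s = t * rstar s

/-- A character of the projection semilattice `P(S)` of `S`: a nonzero
(`Prop`-valued) meet-semilattice morphism on the projections. -/
def IsProjChar (φ : S → Prop) : Prop :=
  (∃ e : S, rstar e = e ∧ φ e) ∧
  ∀ e f : S, rstar e = e → rstar f = f → (φ (e * f) ↔ φ e ∧ φ f)

lemma rstar_idem' (x : S) : rstar x * rstar x = rstar x := by
  have h1 : rstar (x * rstar x) = rstar (rstar x * rstar x) := rstar_mul x (rstar x)
  rw [mul_rstar_self] at h1
  have h2 := rstar_mul_proj x x
  rw [← h1] at h2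
  exact h2

lemma rstar_rstar' (x : S) : rstar (rstar x) = rstar x := by
  have h2 := rstar_mul_proj x x
  rw [rstar_idem'] at h2
  exact h2.symm

/-- The principal-filter character `χ_{(p)↑}` at `p = rstar s` is a character. -/
lemma princ_char (x : S) : IsProjChar (fun a : S => rstar x * a = rstar x) := by
  constructor
  · exact ⟨rstar x, rstar_rstar' x, rstar_idem' x⟩
  · intro e f he hf
    have hcomm : e * f = f * e := by
      have := rstar_comm e f; rwa [he, hf] at this
    have hee : e * e = e := by have := rstar_idem' e; rwa [he] at this
    have hff : f * f = f := by have := rstar_idem' f; rwa [hf] at this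
    have key1 : (e * f) * e = e * f := by
      rw [hcomm, mul_assoc, hee, ← hcomm]
    have key2 : (e * f) * f = e * f := by
      rw [mul_assoc, hff]
    constructor
    · intro h
      refine ⟨?_, ?_⟩
      · show rstar x * e = rstar x
        calc rstar x * e = (rstar x * (e * f)) * e := by rw [h]
          _ = rstar x * ((e * f) * e) := by rw [mul_assoc]
          _ = rstar x * (e * f) := by rw [key1]
          _ = rstar x := h
      · show rstar x * f = rstar x
        calc rstar x * f = (rstar x * (e * f)) * f := by rw [h]
          _ = rstar x * ((e * f) * f) := by rw [mul_assoc]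
          _ = rstar x * (e * f) := by rw [key2]
          _ = rstar x := h
    · rintro ⟨h1, h2⟩
      show rstar x * (e * f) = rstar x
      rw [← mul_assoc, h1, h2]

/-- Injectivity of `ι : s ↦ (s, D_{s*})` into germs: if `S` is a restriction
semigroup with local units, `D_{s*} = D_{t*}`, and for every character `φ` with
`φ(s*) = 1 = φ(t*)` the pairs `(s, φ)` and `(t, φ)` are germ-equivalent (there
is `u ≤ s, t` with `φ(u*) = 1`), then `s = t`. -/
theorem stmt17
    (hlu : ∀ s : S, ∃ e f : S, rstar e = e ∧ rstar f = f ∧ e * s = s ∧ s * f = s)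
    (s t : S)
    (hD : ∀ φ : S → Prop, IsProjChar φ → (φ (rstar s) ↔ φ (rstar t)))
    (hgerm : ∀ φ : S → Prop, IsProjChar φ → φ (rstar s) → φ (rstar t) →
      ∃ u : S, rle u s ∧ rle u t ∧ φ (rstar u)) :
    s = t := by
  -- first character: principal filter at s*
  have hst : s = t * rstar s := by
    set φ : S → Prop := fun a => rstar s * a = rstar s with hφ
    have hchar := princ_char (S := S) s
    have hps : φ (rstar s) := rstar_idem' s
    have hpt : φ (rstar t) := (hD φ hchar).mp hps
    obtain ⟨u, hus, hut, hpu⟩ := hgerm φ hchar hps hpt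
    -- s = u
    have hsu : s = u := by
      calc s = s * rstar s := (mul_rstar_self s).symm
        _ = s * (rstar s * rstar u) := by rw [hpu]
        _ = (s * rstar s) * rstar u := by rw [mul_assoc]
        _ = s * rstar u := by rw [mul_rstar_self]
        _ = u := hus.symm
    rw [hsu]; exact hut
  have hts : t = s * rstar t := by
    set φ : S → Prop := fun a => rstar t * a = rstar t with hφ
    have hchar := princ_char (S := S) t
    have hpt : φ (rstar t) := rstar_idem' t
    have hps : φ (rstar s) := (hD φ hchar).mpr hpt
    obtain ⟨u, hus, hut, hpu⟩ := hgerm φ hchar hps hpt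
    have htu : t = u := by
      calc t = t * rstar t := (mul_rstar_self t).symm
        _ = t * (rstar t * rstar u) := by rw [hpu]
        _ = (t * rstar t) * rstar u := by rw [mul_assoc]
        _ = t * rstar u := by rw [mul_rstar_self]
        _ = u := hut.symm
    rw [htu]; exact hus
  have hfin : t = s := calc
    t = s * rstar t := hts
    _ = (t * rstar s) * rstar t := by rw [← hst]
    _ = t * (rstar s * rstar t) := by rw [mul_assoc]
    _ = t * (rstar t * rstar s) := by rw [rstar_comm]
    _ = (t * rstar t) * rstar s := by rw [← mul_assoc]
    _ = t * rstar s := by rw [mul_rstar_self]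
    _ = s := hst.symm
  exact hfin.symm
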